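/- Let L be a finite field of order q with q ≡ 5 (mod 6), s = q - 2, and N(v) the number of pairs (x,y) ∈ L² with x + y = 1 and x^s + y^s = v. Then N takes only the values 0, 1, 2, with value 0 occurring for (q-1)/2 values of v, value 1 for exactly one v, and value 2 for (q-1)/2 values of v. -/

import Mathlib

open Finset

private lemma stmt15_cast_ne {L : Type*} [Field L] [Fintype L]
    (hq : Fintype.card L % 6 = 5) : (2 : L) ≠ 0 ∧ (3 : L) ≠ 0 := by
  have hcard : ((Fintype.card L : ℕ) : L) = 0 := FiniteField.cast_card_eq_zero L
  set q := Fintype.card L with hqdef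
  constructor
  · intro h2
    have h1 : ((2 * (q / 2 + 1) - q : ℕ) : L) = 1 := by
      have h : 2 * (q / 2 + 1) - q = 1 := by omega
      rw [h, Nat.cast_one]
    rw [Nat.cast_sub (by omega)] at h1
    push_cast at h1
    rw [h2, hcard] at h1
    simp at h1
  · intro h3
    have h1 : ((3 * (q / 3 + 1) - q : ℕ) : L) = 1 := by
      have h : 3 * (q / 3 + 1) - q = 1 := by omega
      rw [h, Nat.cast_one]
    rw [Nat.cast_sub (by omega)] at h1
    push_cast at h1
    rw [h3, hcard] at h1
    simp at h1

private lemma stmt15_no_sqrt {L : Type*} [Field L] [Fintype L]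
    (hq : Fintype.card L % 6 = 5) (u : L) : u * u ≠ -3 := by
  intro hu
  obtain ⟨h2, h3⟩ := stmt15_cast_ne hq
  set ζ : L := (u - 1) / 2 with hζ
  have hz : ζ ^ 2 + ζ + 1 = 0 := by
    rw [hζ]
    field_simp
    linear_combination hu
  have hz3 : ζ ^ 3 = 1 := by linear_combination (ζ - 1) * hz
  have hz1 : ζ ≠ 1 := by
    intro h
    rw [h] at hz
    exact h3 (by linear_combination hz)
  have hz0 : ζ ≠ 0 := by
    intro h
    rw [h] at hz
    simp at hz
  have hord : orderOf ζ = 3 := by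
    have hdvd : orderOf ζ ∣ 3 := orderOf_dvd_of_pow_eq_one hz3
    rcases (Nat.prime_three.eq_one_or_self_of_dvd _ hdvd) with h | h
    · exact absurd (orderOf_eq_one_iff.mp h) hz1
    · exact h
  have hdvd2 : orderOf ζ ∣ Fintype.card L - 1 :=
    orderOf_dvd_of_pow_eq_one (FiniteField.pow_card_sub_one_eq_one ζ hz0)
  rw [hord] at hdvd2
  omega

theorem stmt_15 (L : Type*) [Field L] [Fintype L]
    (hq : Fintype.card L % 6 = 5) :
    (∀ v : L,
        Nat.card {xy : L × L // xy.1 + xy.2 = 1 ∧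
            xy.1 ^ (Fintype.card L - 2) + xy.2 ^ (Fintype.card L - 2) = v} = 0 ∨
        Nat.card {xy : L × L // xy.1 + xy.2 = 1 ∧
            xy.1 ^ (Fintype.card L - 2) + xy.2 ^ (Fintype.card L - 2) = v} = 1 ∨
        Nat.card {xy : L × L // xy.1 + xy.2 = 1 ∧
            xy.1 ^ (Fintype.card L - 2) + xy.2 ^ (Fintype.card L - 2) = v} = 2) ∧
    Nat.card {v : L // Nat.card {xy : L × L // xy.1 + xy.2 = 1 ∧
        xy.1 ^ (Fintype.card L - 2) + xy.2 ^ (Fintype.card L - 2) = v} = 0}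
      = (Fintype.card L - 1) / 2 ∧
    Nat.card {v : L // Nat.card {xy : L × L // xy.1 + xy.2 = 1 ∧
        xy.1 ^ (Fintype.card L - 2) + xy.2 ^ (Fintype.card L - 2) = v} = 1} = 1 ∧
    Nat.card {v : L // Nat.card {xy : L × L // xy.1 + xy.2 = 1 ∧
        xy.1 ^ (Fintype.card L - 2) + xy.2 ^ (Fintype.card L - 2) = v} = 2}
      = (Fintype.card L - 1) / 2 := by
  classical
  obtain ⟨h2, h3⟩ := stmt15_cast_ne hq
  set q := Fintype.card L with hq_def
  have hq5 : 5 ≤ q := by omega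
  set s := q - 2 with hs_def
  have hs0 : s ≠ 0 := by omega
  have hpow : ∀ x : L, x ≠ 0 → x ^ s = x⁻¹ := by
    intro x hx
    have h1 : x ^ (q - 1) = 1 := FiniteField.pow_card_sub_one_eq_one x hx
    have hmul : x * x ^ s = 1 := by
      rw [← pow_succ']
      rw [show s + 1 = q - 1 by omega, h1]
    exact (inv_eq_of_mul_eq_one_right hmul).symm
  set g : L → L := fun x => x ^ s + (1 - x) ^ s with hg
  -- reduce pair count to fiber count
  have hN : ∀ v : L,
      Nat.card {xy : L × L // xy.1 + xy.2 = 1 ∧ xy.1 ^ s + xy.2 ^ s = v}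
        = (univ.filter fun x => g x = v).card := by
    intro v
    have e : {xy : L × L // xy.1 + xy.2 = 1 ∧ xy.1 ^ s + xy.2 ^ s = v}
        ≃ {x : L // g x = v} := by
      refine ⟨fun p => ⟨p.1.1, ?_⟩, fun x => ⟨(x.1, 1 - x.1), by ring, x.2⟩, ?_, ?_⟩
      · show p.1.1 ^ s + (1 - p.1.1) ^ s = v
        rw [show (1 : L) - p.1.1 = p.1.2 by linear_combination -p.2.1]
        exact p.2.2
      · rintro ⟨⟨x, y⟩, h1, hh2⟩
        apply Subtype.ext
        show (x, 1 - x) = (x, y)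
        exact Prod.ext rfl (by linear_combination -h1)
      · intro x
        rfl
    rw [Nat.card_congr e, Nat.card_eq_fintype_card, Fintype.card_subtype]
  simp only [hN]
  have hg0 : g 0 = 1 := by
    simp only [hg]
    rw [zero_pow hs0, sub_zero, one_pow, zero_add]
  have hg1 : g 1 = 1 := by
    simp only [hg]
    rw [sub_self, zero_pow hs0, one_pow, add_zero]
  have hgx : ∀ x : L, x ≠ 0 → x ≠ 1 → ∀ v : L, (g x = v ↔ v * (x * (1 - x)) = 1) := by
    intro x hx0 hx1 v
    have hx1' : (1 : L) - x ≠ 0 := sub_ne_zero.mpr (Ne.symm hx1)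
    have hxx : x * (1 - x) ≠ 0 := mul_ne_zero hx0 hx1'
    simp only [hg]
    rw [hpow x hx0, hpow _ hx1']
    have key : x⁻¹ + (1 - x)⁻¹ = (x * (1 - x))⁻¹ := by
      field_simp
      ring
    rw [key]
    constructor
    · rintro rfl
      field_simp
    · intro h
      field_simp
      linear_combination -h
  have h4 : (4 : L) ≠ 0 := by
    rw [show (4 : L) = 2 * 2 by norm_num]
    exact mul_ne_zero h2 h2
  have h41 : (4 : L) ≠ 1 := by
    intro h
    exact h3 (by linear_combination h)
  have hhalf0 : (2⁻¹ : L) ≠ 0 := inv_ne_zero h2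
  have hhalf1 : (2⁻¹ : L) ≠ 1 := by
    intro h
    have h' : (1 : L) = 2 := by
      calc (1 : L) = 2 * 2⁻¹ := by rw [mul_inv_cancel₀ h2]
        _ = 2 := by rw [h, mul_one]
    exact one_ne_zero (by linear_combination -h' : (1 : L) = 0)
  -- fiber over 4 is {2⁻¹}
  have hfib4 : (univ.filter fun x => g x = 4) = {2⁻¹} := by
    ext x
    simp only [mem_filter, mem_univ, true_and, mem_singleton]
    constructor
    · intro hx
      have hx0 : x ≠ 0 := by rintro rfl; rw [hg0] at hx; exact h41 hx.symm
      have hx1 : x ≠ 1 := by rintro rfl; rw [hg1] at hx; exact h41 hx.symm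
      have e := (hgx x hx0 hx1 4).mp hx
      have hz : (2 * x - 1) * (2 * x - 1) = 0 := by linear_combination -e
      have h21 : 2 * x - 1 = 0 := by rcases mul_eq_zero.mp hz with h | h <;> exact h
      field_simp
      linear_combination h21
    · rintro rfl
      rw [hgx _ hhalf0 hhalf1 4]
      field_simp
      norm_num
  -- fibers have at most 2 elements
  have hA : ∀ v : L, (univ.filter fun x => g x = v).card ≤ 2 := by
    intro v
    by_cases hv : v = 1
    · subst hv
      have hsub : (univ.filter fun x => g x = 1) ⊆ {0, 1} := by
        intro x hx
        rw [mem_filter] at hx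
        by_contra hmem
        simp only [mem_insert, mem_singleton] at hmem
        push_neg at hmem
        obtain ⟨hx0, hx1⟩ := hmem
        have hxe := (hgx x hx0 hx1 1).mp hx.2
        exact stmt15_no_sqrt hq (2 * x - 1) (by linear_combination -4 * hxe)
      exact (card_le_card hsub).trans ((card_insert_le _ _).trans (by simp))
    · rcases (univ.filter fun x => g x = v).eq_empty_or_nonempty with he | ⟨x0, hx0mem⟩
      · simp [he]
      · have hnot : ∀ z : L, g z = v → z ≠ 0 ∧ z ≠ 1 := by
          intro z hz
          constructor
          · rintro rfl; rw [hg0] at hz; exact hv hz.symm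
          · rintro rfl; rw [hg1] at hz; exact hv hz.symm
        rw [mem_filter] at hx0mem
        obtain ⟨hx00, hx01⟩ := hnot x0 hx0mem.2
        have e2 := (hgx x0 hx00 hx01 v).mp hx0mem.2
        have hv0 : v ≠ 0 := by rintro rfl; rw [zero_mul] at e2; exact one_ne_zero e2.symm
        have hsub : (univ.filter fun x => g x = v) ⊆ {x0, 1 - x0} := by
          intro y hy
          rw [mem_filter] at hy
          obtain ⟨hy0, hy1⟩ := hnot y hy.2
          have e1 := (hgx y hy0 hy1 v).mp hy.2
          have hprod : (y - x0) * (y + x0 - 1) = 0 := by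
            have h := mul_left_cancel₀ hv0 (e1.trans e2.symm)
            linear_combination -h
          simp only [mem_insert, mem_singleton]
          rcases mul_eq_zero.mp hprod with h | h
          · exact Or.inl (sub_eq_zero.mp h)
          · exact Or.inr (by linear_combination h)
        exact (card_le_card hsub).trans ((card_insert_le _ _).trans (by simp))
  -- no fiber besides 4 has exactly one element
  have hB : ∀ v : L, v ≠ 4 → (univ.filter fun x => g x = v).card ≠ 1 := by
    intro v hv4 hc
    obtain ⟨x, hx⟩ := card_eq_one.mp hc
    by_cases hv1 : v = 1
    · subst hv1
      have m0 : (0 : L) ∈ univ.filter fun y => g y = 1 := by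
        simp only [mem_filter, mem_univ, true_and]; exact hg0
      have m1 : (1 : L) ∈ univ.filter fun y => g y = 1 := by
        simp only [mem_filter, mem_univ, true_and]; exact hg1
      rw [hx, mem_singleton] at m0 m1
      exact one_ne_zero (m1.trans m0.symm)
    · have mx : x ∈ univ.filter fun y => g y = v := hx ▸ mem_singleton_self x
      rw [mem_filter] at mx
      have hx0 : x ≠ 0 := by rintro rfl; rw [hg0] at mx; exact hv1 mx.2.symm
      have hx1 : x ≠ 1 := by rintro rfl; rw [hg1] at mx; exact hv1 mx.2.symm
      have hsym : g (1 - x) = v := by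
        have := mx.2
        simp only [hg] at this ⊢
        rw [sub_sub_cancel, add_comm]
        exact this
      have m2 : 1 - x ∈ univ.filter fun y => g y = v := by
        simp only [mem_filter, mem_univ, true_and]; exact hsym
      rw [hx, mem_singleton] at m2
      have e := (hgx x hx0 hx1 v).mp mx.2
      apply hv4
      -- 1 - x = x, so 2x = 1
      have hxx : x = 2⁻¹ := by field_simp; linear_combination -m2
      rw [hxx] at e
      field_simp at e
      linear_combination e
  have hc4 : (univ.filter fun x => g x = (4:L)).card = 1 := by rw [hfib4, card_singleton]
  -- sum of fiber cards
  have hsum : ∑ v : L, (univ.filter fun x => g x = v).card = q := by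
    rw [hq_def, ← card_univ]
    exact (card_eq_sum_card_fiberwise (fun x _ => mem_univ (g x))).symm
  -- the set of v with fiber card 1 is {4}
  have hf1 : (univ.filter fun v : L => (univ.filter fun x => g x = v).card = 1) = {4} := by
    ext v
    simp only [mem_filter, mem_univ, true_and, mem_singleton]
    constructor
    · intro h
      by_contra hne
      exact hB v hne h
    · rintro rfl
      exact hc4
  -- partition counting
  have d01 : Disjoint (univ.filter fun v : L => (univ.filter fun x => g x = v).card = 0) (univ.filter fun v : L => (univ.filter fun x => g x = v).card = 1) := by
    rw [disjoint_left]
    intro a h1 h2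
    rw [mem_filter] at h1 h2
    omega
  have d012 : Disjoint ((univ.filter fun v : L => (univ.filter fun x => g x = v).card = 0) ∪ (univ.filter fun v : L => (univ.filter fun x => g x = v).card = 1))
      (univ.filter fun v : L => (univ.filter fun x => g x = v).card = 2) := by
    rw [disjoint_left]
    intro a h1 h2
    rw [mem_union, mem_filter, mem_filter] at h1
    rw [mem_filter] at h2
    omega
  have h01 : ((univ.filter fun v : L => (univ.filter fun x => g x = v).card = 0) ∪ (univ.filter fun v : L => (univ.filter fun x => g x = v).card = 1))
      ∪ (univ.filter fun v : L => (univ.filter fun x => g x = v).card = 2) = univ := by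
    ext v
    simp only [mem_union, mem_filter, mem_univ, true_and, iff_true]
    have := hA v
    omega
  have hpart : (univ.filter fun v : L => (univ.filter fun x => g x = v).card = 0).card + (univ.filter fun v : L => (univ.filter fun x => g x = v).card = 1).card
      + (univ.filter fun v : L => (univ.filter fun x => g x = v).card = 2).card = q := by
    have := congrArg Finset.card h01
    rw [card_union_of_disjoint d012, card_union_of_disjoint d01, card_univ, ← hq_def] at this
    omega
  have hsum2 : (univ.filter fun v : L => (univ.filter fun x => g x = v).card = 1).card
      + 2 * (univ.filter fun v : L => (univ.filter fun x => g x = v).card = 2).card = q := by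
    have hs' : ∑ v ∈ (((univ.filter fun v : L => (univ.filter fun x => g x = v).card = 0) ∪ (univ.filter fun v : L => (univ.filter fun x => g x = v).card = 1))
        ∪ (univ.filter fun v : L => (univ.filter fun x => g x = v).card = 2)), (univ.filter fun x => g x = v).card = q := by
      rw [h01]; exact hsum
    rw [sum_union d012, sum_union d01] at hs'
    have s0 : ∑ v ∈ (univ.filter fun v : L => (univ.filter fun x => g x = v).card = 0), (univ.filter fun x => g x = v).card = 0 :=
      sum_eq_zero (fun v hv => (mem_filter.mp hv).2)
    have s1 : ∑ v ∈ (univ.filter fun v : L => (univ.filter fun x => g x = v).card = 1),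
        (univ.filter fun x => g x = v).card
        = (univ.filter fun v : L => (univ.filter fun x => g x = v).card = 1).card := by
      rw [sum_congr rfl (fun v hv => (mem_filter.mp hv).2), sum_const, smul_eq_mul, mul_one]
    have s2 : ∑ v ∈ (univ.filter fun v : L => (univ.filter fun x => g x = v).card = 2),
        (univ.filter fun x => g x = v).card
        = 2 * (univ.filter fun v : L => (univ.filter fun x => g x = v).card = 2).card := by
      rw [sum_congr rfl (fun v hv => (mem_filter.mp hv).2), sum_const, smul_eq_mul, mul_comm]
    rw [s0, s1, s2] at hs'
    omega
  have hcard1 : (univ.filter fun v : L => (univ.filter fun x => g x = v).card = 1).card = 1 := by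
    rw [hf1, card_singleton]
  refine ⟨fun v => by have := hA v; omega, ?_, ?_, ?_⟩
  · rw [Nat.card_eq_fintype_card, Fintype.card_subtype]
    omega
  · rw [Nat.card_eq_fintype_card, Fintype.card_subtype]
    omega
  · rw [Nat.card_eq_fintype_card, Fintype.card_subtype]
    omega
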